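/- Interlacing property of the SCA iterates: let (Q^0, W^0) ∈ S_Z, assume Cs is bounded above on S_Z, set C_s^* = sup_{(Q,W)∈S_Z} Cs(Q,W), and suppose for every v ≥ 1 the triple (Q^v, W^v, t^v) is a maximizer of R(Q,t) over S_{Z,t}(Q^{v−1}, W^{v−1}). Then for every v ≥ 2: C_s^* ≥ Cs(Q^v, W^v) ≥ R(Q^v, t^v) ≥ Cs(Q^{v−1}, W^{v−1}) ≥ R(Q^{v−1}, t^{v−1}). -/

import Mathlib

open Matrix Finset ComplexOrder

namespace SRM

/-- `log det` of a complex matrix: real logarithm of the real part of the determinant. -/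
noncomputable def phik {m n : ℕ} (H P : Matrix (Fin m) (Fin n) ℂ)
    (Q W : Matrix (Fin n) (Fin n) ℂ) : ℝ :=
  Real.log ((1 + H * Q * Hᴴ + P * W * Pᴴ).det.re)

noncomputable def phiHat {m n : ℕ} (P : Matrix (Fin m) (Fin n) ℂ)
    (W : Matrix (Fin n) (Fin n) ℂ) : ℝ :=
  Real.log ((1 + P * W * Pᴴ).det.re)

/-- The `k`-th eavesdropper rate `C_k(Q,W)`. -/
noncomputable def Ceav {m n : ℕ} (H P : Matrix (Fin m) (Fin n) ℂ)
    (Q W : Matrix (Fin n) (Fin n) ℂ) : ℝ :=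
  phik H P Q W - phiHat P W

/-- The legitimate (Alice-Bob) rate `C_0(Q)`. -/
noncomputable def C0 {m n : ℕ} (H0 : Matrix (Fin m) (Fin n) ℂ)
    (Q : Matrix (Fin n) (Fin n) ℂ) : ℝ :=
  Real.log ((1 + H0 * Q * H0ᴴ).det.re)

/-- Gradient matrix `T_k(Q',W')`. -/
noncomputable def Tmat {m n : ℕ} (H P : Matrix (Fin m) (Fin n) ℂ)
    (Q' W' : Matrix (Fin n) (Fin n) ℂ) : Matrix (Fin n) (Fin n) ℂ :=
  Hᴴ * (1 + H * Q' * Hᴴ + P * W' * Pᴴ)⁻¹ * H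

/-- Gradient matrix `R_k(Q',W')`. -/
noncomputable def Rmat {m n : ℕ} (H P : Matrix (Fin m) (Fin n) ℂ)
    (Q' W' : Matrix (Fin n) (Fin n) ℂ) : Matrix (Fin n) (Fin n) ℂ :=
  Pᴴ * (1 + H * Q' * Hᴴ + P * W' * Pᴴ)⁻¹ * P

/-- Gradient of `φ̂_k` with respect to `W`. -/
noncomputable def Dmat {m n : ℕ} (P : Matrix (Fin m) (Fin n) ℂ)
    (W : Matrix (Fin n) (Fin n) ℂ) : Matrix (Fin n) (Fin n) ℂ :=
  Pᴴ * (1 + P * W * Pᴴ)⁻¹ * P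

/-- Gradient of `C_0` with respect to `Q`. -/
noncomputable def D0mat {m n : ℕ} (H0 : Matrix (Fin m) (Fin n) ℂ)
    (Q : Matrix (Fin n) (Fin n) ℂ) : Matrix (Fin n) (Fin n) ℂ :=
  H0ᴴ * (1 + H0 * Q * H0ᴴ)⁻¹ * H0

/-- First-order (linear) approximation `φ̄_k(Q,W | Q',W')` of `φ_k` around `(Q',W')`. -/
noncomputable def phiBar {m n : ℕ} (H P : Matrix (Fin m) (Fin n) ℂ)
    (Q W Q' W' : Matrix (Fin n) (Fin n) ℂ) : ℝ :=
  phik H P Q' W' + ((Tmat H P Q' W' * (Q - Q')).trace).re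
    + ((Rmat H P Q' W' * (W - W')).trace).re

/-- Convexified eavesdropper rate `C_{lk}(Q,W | Q',W')`. -/
noncomputable def Clk {m n : ℕ} (H P : Matrix (Fin m) (Fin n) ℂ)
    (Q W Q' W' : Matrix (Fin n) (Fin n) ℂ) : ℝ :=
  phiBar H P Q W Q' W' - phiHat P W

/-- Secrecy rate `C_s(Q,W) = C_0(Q) - max_k C_k(Q,W)`. -/
noncomputable def Cs {m0 n : ℕ} {K : Type*} [Fintype K] [Nonempty K] {mk : K → ℕ}
    (H0 : Matrix (Fin m0) (Fin n) ℂ)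
    (Hm Pm : (k : K) → Matrix (Fin (mk k)) (Fin n) ℂ)
    (Q W : Matrix (Fin n) (Fin n) ℂ) : ℝ :=
  C0 H0 Q - Finset.univ.sup' Finset.univ_nonempty (fun k => Ceav (Hm k) (Pm k) Q W)

/-- The feasible set `S_Z`. -/
def SZ {mg n : ℕ} (G : Matrix (Fin mg) (Fin n) ℂ) (V : Matrix (Fin n) (Fin n) ℂ)
    (Pmax Γ : ℝ) : Set (Matrix (Fin n) (Fin n) ℂ × Matrix (Fin n) (Fin n) ℂ) :=
  {Z | Z.1.PosSemidef ∧ Z.2.PosSemidef ∧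
    ((G * Z.1 * Gᴴ + G * V * Z.2 * Vᴴ * Gᴴ).trace).re ≤ Γ ∧
    ((Z.1 + Z.2).trace).re ≤ Pmax}

/-- The approximate feasible set `S_{Z,t}(Q',W')`. -/
def SZt {mg n : ℕ} {K : Type*} [Fintype K] {mk : K → ℕ}
    (G : Matrix (Fin mg) (Fin n) ℂ) (V : Matrix (Fin n) (Fin n) ℂ) (Pmax Γ : ℝ)
    (Hm Pm : (k : K) → Matrix (Fin (mk k)) (Fin n) ℂ)
    (Q' W' : Matrix (Fin n) (Fin n) ℂ) :
    Set ((Matrix (Fin n) (Fin n) ℂ × Matrix (Fin n) (Fin n) ℂ) × ℝ) :=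
  {x | x.1 ∈ SZ G V Pmax Γ ∧ ∀ k : K, Clk (Hm k) (Pm k) x.1.1 x.1.2 Q' W' ≤ x.2}

/-- The objective `R(Q,t) = C_0(Q) - t`. -/
noncomputable def Robj {m0 n : ℕ} (H0 : Matrix (Fin m0) (Fin n) ℂ)
    (Q : Matrix (Fin n) (Fin n) ℂ) (t : ℝ) : ℝ :=
  C0 H0 Q - t


end SRM

namespace SRM

lemma trace_eq_sum_eig {N : ℕ} {M : Matrix (Fin N) (Fin N) ℂ} (hM : M.IsHermitian) :
    M.trace = ∑ i, (hM.eigenvalues i : ℂ) := by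
  conv_lhs => rw [hM.spectral_theorem, Unitary.conjStarAlgAut_apply]
  rw [trace_mul_cycle,
    show (star (hM.eigenvectorUnitary : Matrix (Fin N) (Fin N) ℂ)) *
      (hM.eigenvectorUnitary : Matrix (Fin N) (Fin N) ℂ) = 1 from
      Matrix.mem_unitaryGroup_iff'.mp hM.eigenvectorUnitary.2, one_mul, trace_diagonal]
  simp

end SRM

namespace SRM

lemma det_re_of_posDef {N : ℕ} {A : Matrix (Fin N) (Fin N) ℂ} (hA : A.PosDef) :
    A.det = (A.det.re : ℂ) ∧ 0 < A.det.re := by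
  have h := hA.det_pos
  rw [Complex.lt_def] at h
  exact ⟨Complex.ext rfl (by simpa using h.2.symm), by simpa using h.1⟩

lemma logdet_le {N : ℕ} {A B : Matrix (Fin N) (Fin N) ℂ} (hA : A.PosDef) (hB : B.PosDef) :
    Real.log B.det.re ≤ Real.log A.det.re + ((A⁻¹ * (B - A)).trace).re := by
  obtain ⟨hAre, hApos⟩ := det_re_of_posDef hA
  obtain ⟨hBre, hBpos⟩ := det_re_of_posDef hB
  open scoped MatrixOrder in
  set S := CFC.sqrt A with hSdef
  open scoped MatrixOrder in
  have hS : S.PosSemidef := (CFC.sqrt_nonneg A).posSemidef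
  open scoped MatrixOrder in
  have hSS : S * S = A := CFC.sqrt_mul_sqrt_self A hA.posSemidef.nonneg
  have hdetA : S.det * S.det = A.det := by rw [← det_mul, hSS]
  have hAdet0 : A.det ≠ 0 := hA.det_pos.ne'
  have hSdet0 : S.det ≠ 0 := fun h => hAdet0 (by rw [← hdetA, h, zero_mul])
  set M := S⁻¹ * B * S⁻¹ with hMdef
  have hSinvH : (S⁻¹)ᴴ = S⁻¹ := by rw [Matrix.conjTranspose_nonsing_inv, hS.1]
  have hM : M.PosSemidef := by
    have := hB.posSemidef.mul_mul_conjTranspose_same S⁻¹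
    rwa [hSinvH] at this
  -- determinant of M
  have hdetM : M.det = B.det * (A.det)⁻¹ := by
    rw [hMdef, det_mul, det_mul, Matrix.det_nonsing_inv, ← hdetA]
    simp only [Ring.inverse_eq_inv']
    field_simp
  have hdetMre : M.det.re = B.det.re / A.det.re := by
    rw [hdetM]
    conv_lhs => rw [hBre, hAre]
    rw [← Complex.ofReal_inv, ← Complex.ofReal_mul, Complex.ofReal_re, div_eq_mul_inv]
  -- eigenvalues
  have heig : M.det = ∏ i, (hM.1.eigenvalues i : ℂ) := hM.1.det_eq_prod_eigenvalues
  have heigre : M.det.re = ∏ i, hM.1.eigenvalues i := by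
    rw [heig]; norm_cast
  have hpos : ∀ i, 0 < hM.1.eigenvalues i := by
    intro i
    rcases lt_or_eq_of_le (hM.eigenvalues_nonneg i) with h | h
    · exact h
    · exfalso
      have : M.det.re = 0 := by
        rw [heigre]
        exact Finset.prod_eq_zero (Finset.mem_univ i) h.symm
      rw [hdetMre] at this
      exact absurd this (ne_of_gt (div_pos hBpos hApos))
  -- trace identity
  have hAinv : A⁻¹ = S⁻¹ * S⁻¹ := by rw [← hSS, Matrix.mul_inv_rev]
  have htr : (A⁻¹ * (B - A)).trace = M.trace - N := by
    rw [Matrix.mul_sub, trace_sub, Matrix.nonsing_inv_mul A (Ne.isUnit hAdet0), trace_one,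
      hAinv, Matrix.mul_assoc, trace_mul_comm, hMdef, Matrix.mul_assoc]
    simp
  have htrM : M.trace.re = ∑ i, hM.1.eigenvalues i := by
    rw [trace_eq_sum_eig hM.1]; norm_cast
  -- main chain
  have key : Real.log M.det.re ≤ M.trace.re - N := by
    rw [heigre, Real.log_prod (fun i _ => (hpos i).ne'), htrM]
    calc ∑ i, Real.log (hM.1.eigenvalues i) ≤ ∑ i, (hM.1.eigenvalues i - 1) :=
          Finset.sum_le_sum fun i _ => Real.log_le_sub_one_of_pos (hpos i)
      _ = (∑ i, hM.1.eigenvalues i) - N := by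
          rw [Finset.sum_sub_distrib]; simp
  have : Real.log B.det.re - Real.log A.det.re ≤ ((A⁻¹ * (B - A)).trace).re := by
    rw [← Real.log_div hBpos.ne' hApos.ne', ← hdetMre]
    calc Real.log M.det.re ≤ M.trace.re - N := key
      _ = ((A⁻¹ * (B - A)).trace).re := by rw [htr]; simp
  linarith

end SRM

namespace SRM

lemma posDef_aux {m n : ℕ} (H P : Matrix (Fin m) (Fin n) ℂ)
    {Q W : Matrix (Fin n) (Fin n) ℂ} (hQ : Q.PosSemidef) (hW : W.PosSemidef) :
    (1 + H * Q * Hᴴ + P * W * Pᴴ).PosDef :=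
  (Matrix.PosDef.one.add_posSemidef (hQ.mul_mul_conjTranspose_same H)).add_posSemidef
    (hW.mul_mul_conjTranspose_same P)

lemma phik_le_phiBar {m n : ℕ} (H P : Matrix (Fin m) (Fin n) ℂ)
    {Q W Q' W' : Matrix (Fin n) (Fin n) ℂ} (hQ : Q.PosSemidef) (hW : W.PosSemidef)
    (hQ' : Q'.PosSemidef) (hW' : W'.PosSemidef) :
    phik H P Q W ≤ phiBar H P Q W Q' W' := by
  set A := 1 + H * Q' * Hᴴ + P * W' * Pᴴ with hAdef
  set B := 1 + H * Q * Hᴴ + P * W * Pᴴ with hBdef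
  have hA : A.PosDef := posDef_aux H P hQ' hW'
  have hB : B.PosDef := posDef_aux H P hQ hW
  have hmain := logdet_le hA hB
  have hBA : B - A = H * (Q - Q') * Hᴴ + P * (W - W') * Pᴴ := by
    rw [hAdef, hBdef]
    simp only [Matrix.mul_sub, Matrix.sub_mul]
    abel
  have htr : (A⁻¹ * (B - A)).trace
      = (Tmat H P Q' W' * (Q - Q')).trace + (Rmat H P Q' W' * (W - W')).trace := by
    rw [hBA, Matrix.mul_add, trace_add]
    congr 1
    · rw [show A⁻¹ * (H * (Q - Q') * Hᴴ) = (A⁻¹ * (H * (Q - Q'))) * Hᴴ by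
          rw [← Matrix.mul_assoc], trace_mul_comm]
      congr 1
      simp only [Tmat, ← hAdef]
      simp only [Matrix.mul_assoc]
    · rw [show A⁻¹ * (P * (W - W') * Pᴴ) = (A⁻¹ * (P * (W - W'))) * Pᴴ by
          rw [← Matrix.mul_assoc], trace_mul_comm]
      congr 1
      simp only [Rmat, ← hAdef]
      simp only [Matrix.mul_assoc]
  simp only [phik, phiBar, ← hAdef, ← hBdef] at *
  rw [htr, Complex.add_re] at hmain
  linarith

lemma Ceav_le_Clk {m n : ℕ} (H P : Matrix (Fin m) (Fin n) ℂ)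
    {Q W Q' W' : Matrix (Fin n) (Fin n) ℂ} (hQ : Q.PosSemidef) (hW : W.PosSemidef)
    (hQ' : Q'.PosSemidef) (hW' : W'.PosSemidef) :
    Ceav H P Q W ≤ Clk H P Q W Q' W' :=
  sub_le_sub_right (phik_le_phiBar H P hQ hW hQ' hW') _

lemma Clk_self {m n : ℕ} (H P : Matrix (Fin m) (Fin n) ℂ)
    (Q W : Matrix (Fin n) (Fin n) ℂ) :
    Clk H P Q W Q W = Ceav H P Q W := by
  simp [Clk, Ceav, phiBar]

end SRM

namespace SRM

/-- interlacing property of the SCA iterates: for every `v ≥ 2`,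
`C_s^* ≥ C_s(Q^v,W^v) ≥ R(Q^v,t^v) ≥ C_s(Q^{v-1},W^{v-1}) ≥ R(Q^{v-1},t^{v-1})`. -/
theorem interlacing {n mg m0 : ℕ} {K : Type*} [Fintype K] [Nonempty K] {mk : K → ℕ} (hn : 0 < n)
    (H0 : Matrix (Fin m0) (Fin n) ℂ)
    (G : Matrix (Fin mg) (Fin n) ℂ) (V : Matrix (Fin n) (Fin n) ℂ)
    (Pmax Γ : ℝ) (hPmax : 0 ≤ Pmax) (hΓ : 0 ≤ Γ)
    (Hm Pm : (k : K) → Matrix (Fin (mk k)) (Fin n) ℂ)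
    (Qs Ws : ℕ → Matrix (Fin n) (Fin n) ℂ) (ts : ℕ → ℝ)
    (h0 : (Qs 0, Ws 0) ∈ SZ G V Pmax Γ)
    (hbdd : BddAbove ((fun Z => Cs H0 Hm Pm Z.1 Z.2) '' SZ G V Pmax Γ))
    (hiter : ∀ v : ℕ, 1 ≤ v →
      ((Qs v, Ws v), ts v) ∈ SZt G V Pmax Γ Hm Pm (Qs (v - 1)) (Ws (v - 1)) ∧
      ∀ x ∈ SZt G V Pmax Γ Hm Pm (Qs (v - 1)) (Ws (v - 1)),
        Robj H0 x.1.1 x.2 ≤ Robj H0 (Qs v) (ts v))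
    (v : ℕ) (hv : 2 ≤ v) :
    Cs H0 Hm Pm (Qs v) (Ws v) ≤ sSup ((fun Z => Cs H0 Hm Pm Z.1 Z.2) '' SZ G V Pmax Γ) ∧
    Robj H0 (Qs v) (ts v) ≤ Cs H0 Hm Pm (Qs v) (Ws v) ∧
    Cs H0 Hm Pm (Qs (v - 1)) (Ws (v - 1)) ≤ Robj H0 (Qs v) (ts v) ∧
    Robj H0 (Qs (v - 1)) (ts (v - 1)) ≤ Cs H0 Hm Pm (Qs (v - 1)) (Ws (v - 1)) := by
  classical
  have hSZ : ∀ u : ℕ, (Qs u, Ws u) ∈ SZ G V Pmax Γ := by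
    intro u
    induction u with
    | zero => exact h0
    | succ m ih => exact ((hiter (m + 1) (by omega)).1).1
  have hPSD : ∀ u : ℕ, (Qs u).PosSemidef ∧ (Ws u).PosSemidef :=
    fun u => ⟨(hSZ u).1, (hSZ u).2.1⟩
  obtain ⟨hmemv, hoptv⟩ := hiter v (by omega)
  have part2 : ∀ u : ℕ, 1 ≤ u → Robj H0 (Qs u) (ts u) ≤ Cs H0 Hm Pm (Qs u) (Ws u) := by
    intro u hu
    obtain ⟨⟨_, hclk⟩, _⟩ := hiter u hu
    have hs : Finset.univ.sup' Finset.univ_nonempty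
        (fun k => Ceav (Hm k) (Pm k) (Qs u) (Ws u)) ≤ ts u := by
      apply Finset.sup'_le
      intro k _
      exact le_trans
        (Ceav_le_Clk _ _ (hPSD u).1 (hPSD u).2 (hPSD (u - 1)).1 (hPSD (u - 1)).2) (hclk k)
    unfold Robj Cs
    linarith
  refine ⟨?_, part2 v (by omega), ?_, part2 (v - 1) (by omega)⟩
  · exact le_csSup hbdd ⟨(Qs v, Ws v), hmemv.1, rfl⟩
  · set t0 : ℝ := Finset.univ.sup' Finset.univ_nonempty
      (fun k => Ceav (Hm k) (Pm k) (Qs (v - 1)) (Ws (v - 1))) with ht0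
    have hx : (((Qs (v - 1), Ws (v - 1)), t0)) ∈
        SZt G V Pmax Γ Hm Pm (Qs (v - 1)) (Ws (v - 1)) := by
      refine ⟨hSZ (v - 1), fun k => ?_⟩
      rw [Clk_self, ht0]
      exact Finset.le_sup' (fun k => Ceav (Hm k) (Pm k) (Qs (v - 1)) (Ws (v - 1)))
        (Finset.mem_univ k)
    have h := hoptv _ hx
    simpa [Robj, Cs, ht0] using h


end SRM
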